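/- The value function is Lipschitz in the policy: for any two stochastic policies π_1, π_2 on a finite MDP with rewards bounded by R_max, ‖v^{π_1} - v^{π_2}‖_∞ ≤ (R_max / (1-γ)^2) · ‖π_1 - π_2‖_∞, where ‖π_1 - π_2‖_∞ = max_s Σ_a |π_1(a|s) - π_2(a|s)|. -/

import Mathlib

structure FinMDP (ns na : ℕ) where
  P : Fin ns → Fin na → Fin ns → ℝ
  r : Fin ns → Fin na → ℝ
  P_nonneg : ∀ s a s', 0 ≤ P s a s'
  P_sum : ∀ s a, ∑ s', P s a s' = 1

def IsPolicy {ns na : ℕ} (π : Fin ns → Fin na → ℝ) : Prop :=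
  (∀ s a, 0 ≤ π s a) ∧ ∀ s, ∑ a, π s a = 1

def Pmat {ns na : ℕ} (M : FinMDP ns na) (π : Fin ns → Fin na → ℝ) :
    Matrix (Fin ns) (Fin ns) ℝ :=
  Matrix.of fun s s' => ∑ a, π s a * M.P s a s'

def rvec {ns na : ℕ} (M : FinMDP ns na) (π : Fin ns → Fin na → ℝ) : Fin ns → ℝ :=
  fun s => ∑ a, π s a * M.r s a

lemma abs_sum_mul_le {n : ℕ} (c x : Fin n → ℝ) (B : ℝ) (hx : ∀ i, |x i| ≤ B) :
    |∑ i, c i * x i| ≤ (∑ i, |c i|) * B := by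
  calc |∑ i, c i * x i| ≤ ∑ i, |c i * x i| := Finset.abs_sum_le_sum_abs _ _
    _ = ∑ i, |c i| * |x i| := by simp [abs_mul]
    _ ≤ ∑ i, |c i| * B :=
        Finset.sum_le_sum fun i _ => mul_le_mul_of_nonneg_left (hx i) (abs_nonneg _)
    _ = (∑ i, |c i|) * B := (Finset.sum_mul _ _ _).symm

lemma pmat_mulVec_abs_le {ns na : ℕ} (M : FinMDP ns na) (π : Fin ns → Fin na → ℝ)
    (hπ : IsPolicy π) (v : Fin ns → ℝ) (s : Fin ns) :
    |(Pmat M π).mulVec v s| ≤ ‖v‖ := by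
  have h : (Pmat M π).mulVec v s = ∑ s', (∑ a, π s a * M.P s a s') * v s' := by
    simp [Pmat, Matrix.mulVec, dotProduct]
  rw [h]
  have := abs_sum_mul_le (fun s' => ∑ a, π s a * M.P s a s') v ‖v‖
    (fun i => by simpa [Real.norm_eq_abs] using norm_le_pi_norm v i)
  have hrow : ∑ s', |∑ a, π s a * M.P s a s'| = 1 := by
    have h1 : ∀ s', |∑ a, π s a * M.P s a s'| = ∑ a, π s a * M.P s a s' := fun s' =>
      abs_of_nonneg (Finset.sum_nonneg fun a _ => mul_nonneg (hπ.1 s a) (M.P_nonneg s a s'))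
    simp only [h1]
    rw [Finset.sum_comm]
    calc ∑ a, ∑ s', π s a * M.P s a s' = ∑ a, π s a * ∑ s', M.P s a s' := by
          simp [Finset.mul_sum]
      _ = ∑ a, π s a := by simp [M.P_sum]
      _ = 1 := hπ.2 s
  rw [hrow, one_mul] at this
  exact this

theorem stmt9 {ns na : ℕ} (γ Rmax : ℝ) (hγ : γ ∈ Set.Ioo (0:ℝ) 1)
    (M : FinMDP ns na) (hR : ∀ s a, |M.r s a| ≤ Rmax)
    (π₁ π₂ : Fin ns → Fin na → ℝ) (h₁ : IsPolicy π₁) (h₂ : IsPolicy π₂)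
    (v₁ v₂ : Fin ns → ℝ)
    (hv₁ : rvec M π₁ + γ • (Pmat M π₁).mulVec v₁ = v₁)
    (hv₂ : rvec M π₂ + γ • (Pmat M π₂).mulVec v₂ = v₂) :
    ‖v₁ - v₂‖ ≤ Rmax / (1-γ)^2 * (⨆ s : Fin ns, ∑ a, |π₁ s a - π₂ s a|) := by
  obtain ⟨hγ0, hγ1⟩ := hγ
  have h1γ : 0 < 1 - γ := by linarith
  rcases isEmpty_or_nonempty (Fin ns) with hns | hns
  · have hv : v₁ - v₂ = 0 := Subsingleton.elim _ _
    rw [hv, norm_zero, Real.iSup_of_isEmpty, mul_zero]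
  rcases isEmpty_or_nonempty (Fin na) with hna | hna
  · have hv1 : v₁ = 0 := by
      funext s
      have := congrFun hv₁ s
      simpa [rvec, Pmat, Matrix.mulVec, dotProduct] using this.symm
    have hv2 : v₂ = 0 := by
      funext s
      have := congrFun hv₂ s
      simpa [rvec, Pmat, Matrix.mulVec, dotProduct] using this.symm
    have hΔ : (⨆ s : Fin ns, ∑ a, |π₁ s a - π₂ s a|) = 0 := by
      simp [Finset.sum_of_isEmpty]
    rw [hv1, hv2, sub_zero, norm_zero, hΔ, mul_zero]
  -- main case
  set Δ := ⨆ s : Fin ns, ∑ a, |π₁ s a - π₂ s a| with hΔdef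
  have hRmax : 0 ≤ Rmax :=
    le_trans (abs_nonneg _) (hR (Classical.arbitrary _) (Classical.arbitrary _))
  have hΔs : ∀ s, ∑ a, |π₁ s a - π₂ s a| ≤ Δ := fun s =>
    le_ciSup (f := fun s => ∑ a, |π₁ s a - π₂ s a|)
      (Set.Finite.bddAbove (Set.finite_range _)) s
  have hΔ0 : 0 ≤ Δ :=
    le_trans (Finset.sum_nonneg fun a _ => abs_nonneg _) (hΔs (Classical.arbitrary _))
  -- bound the reward vector
  have hrabs : ∀ (π : Fin ns → Fin na → ℝ) (hπ : IsPolicy π) (s : Fin ns),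
      |rvec M π s| ≤ Rmax := by
    intro π hπ s
    have := abs_sum_mul_le (π s) (M.r s) Rmax (hR s)
    have hc : ∑ a, |π s a| = 1 := by
      simp only [fun a => abs_of_nonneg (hπ.1 s a)]
      exact hπ.2 s
    rwa [hc, one_mul] at this
  -- bound ‖v₂‖
  have hv2b : ‖v₂‖ ≤ Rmax / (1 - γ) := by
    have hb : ‖v₂‖ ≤ Rmax + γ * ‖v₂‖ := by
      rw [pi_norm_le_iff_of_nonneg
        (by positivity)]
      intro s
      have e := congrFun hv₂ s
      simp only [Pi.add_apply, Pi.smul_apply, smul_eq_mul] at e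
      rw [Real.norm_eq_abs, ← e]
      calc |rvec M π₂ s + γ * (Pmat M π₂).mulVec v₂ s|
          ≤ |rvec M π₂ s| + |γ * (Pmat M π₂).mulVec v₂ s| := abs_add_le _ _
        _ = |rvec M π₂ s| + γ * |(Pmat M π₂).mulVec v₂ s| := by
            rw [abs_mul, abs_of_nonneg hγ0.le]
        _ ≤ Rmax + γ * ‖v₂‖ := by
            have := pmat_mulVec_abs_le M π₂ h₂ v₂ s
            have := hrabs π₂ h₂ s
            nlinarith
    rw [le_div_iff₀ h1γ]
    nlinarith [norm_nonneg v₂]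
  -- key pointwise bound
  have key : ∀ s, |v₁ s - v₂ s| ≤ Rmax * Δ + γ * (Δ * ‖v₂‖) + γ * ‖v₁ - v₂‖ := by
    intro s
    have e1 := congrFun hv₁ s
    have e2 := congrFun hv₂ s
    simp only [Pi.add_apply, Pi.smul_apply, smul_eq_mul] at e1 e2
    have hsplit : v₁ s - v₂ s =
        (rvec M π₁ s - rvec M π₂ s)
        + γ * ((Pmat M π₁).mulVec v₂ s - (Pmat M π₂).mulVec v₂ s)
        + γ * ((Pmat M π₁).mulVec (v₁ - v₂) s) := by
      have hlin : (Pmat M π₁).mulVec (v₁ - v₂) s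
          = (Pmat M π₁).mulVec v₁ s - (Pmat M π₁).mulVec v₂ s := by
        rw [Matrix.mulVec_sub]; rfl
      rw [hlin, ← e1, ← e2]; ring
    -- bound reward difference
    have hrd : |rvec M π₁ s - rvec M π₂ s| ≤ Rmax * Δ := by
      have heq : rvec M π₁ s - rvec M π₂ s = ∑ a, (π₁ s a - π₂ s a) * M.r s a := by
        simp [rvec, sub_mul, Finset.sum_sub_distrib]
      rw [heq]
      calc |∑ a, (π₁ s a - π₂ s a) * M.r s a|
          ≤ (∑ a, |π₁ s a - π₂ s a|) * Rmax := abs_sum_mul_le _ _ _ (hR s)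
        _ ≤ Δ * Rmax := mul_le_mul_of_nonneg_right (hΔs s) hRmax
        _ = Rmax * Δ := mul_comm _ _
    -- bound P-difference term
    have hpd : |(Pmat M π₁).mulVec v₂ s - (Pmat M π₂).mulVec v₂ s| ≤ Δ * ‖v₂‖ := by
      have heq : (Pmat M π₁).mulVec v₂ s - (Pmat M π₂).mulVec v₂ s
          = ∑ a, (π₁ s a - π₂ s a) * ∑ s', M.P s a s' * v₂ s' := by
        simp only [Pmat, Matrix.mulVec, dotProduct, Matrix.of_apply]
        rw [← Finset.sum_sub_distrib]
        calc ∑ s', ((∑ a, π₁ s a * M.P s a s') * v₂ s'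
                - (∑ a, π₂ s a * M.P s a s') * v₂ s')
            = ∑ s', ∑ a, (π₁ s a - π₂ s a) * (M.P s a s' * v₂ s') := by
              refine Finset.sum_congr rfl fun s' _ => ?_
              rw [← sub_mul, ← Finset.sum_sub_distrib, Finset.sum_mul]
              exact Finset.sum_congr rfl fun a _ => by ring
          _ = ∑ a, ∑ s', (π₁ s a - π₂ s a) * (M.P s a s' * v₂ s') := Finset.sum_comm
          _ = ∑ a, (π₁ s a - π₂ s a) * ∑ s', M.P s a s' * v₂ s' := by
              simp [Finset.mul_sum]
      rw [heq]
      have hinner : ∀ a, |∑ s', M.P s a s' * v₂ s'| ≤ ‖v₂‖ := by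
        intro a
        have := abs_sum_mul_le (M.P s a) v₂ ‖v₂‖
          (fun i => by simpa [Real.norm_eq_abs] using norm_le_pi_norm v₂ i)
        have hc : ∑ s', |M.P s a s'| = 1 := by
          simp only [fun s' => abs_of_nonneg (M.P_nonneg s a s')]
          exact M.P_sum s a
        rwa [hc, one_mul] at this
      calc |∑ a, (π₁ s a - π₂ s a) * ∑ s', M.P s a s' * v₂ s'|
          ≤ (∑ a, |π₁ s a - π₂ s a|) * ‖v₂‖ := abs_sum_mul_le _ _ _ hinner
        _ ≤ Δ * ‖v₂‖ := mul_le_mul_of_nonneg_right (hΔs s) (norm_nonneg _)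
    have hpv : |(Pmat M π₁).mulVec (v₁ - v₂) s| ≤ ‖v₁ - v₂‖ :=
      pmat_mulVec_abs_le M π₁ h₁ (v₁ - v₂) s
    rw [hsplit]
    calc |(rvec M π₁ s - rvec M π₂ s)
          + γ * ((Pmat M π₁).mulVec v₂ s - (Pmat M π₂).mulVec v₂ s)
          + γ * ((Pmat M π₁).mulVec (v₁ - v₂) s)|
        ≤ |rvec M π₁ s - rvec M π₂ s|
          + γ * |(Pmat M π₁).mulVec v₂ s - (Pmat M π₂).mulVec v₂ s|
          + γ * |(Pmat M π₁).mulVec (v₁ - v₂) s| := by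
          have h := (abs_add_le
              ((rvec M π₁ s - rvec M π₂ s)
                + γ * ((Pmat M π₁).mulVec v₂ s - (Pmat M π₂).mulVec v₂ s))
              (γ * ((Pmat M π₁).mulVec (v₁ - v₂) s))).trans
            (add_le_add_left (abs_add_le _ _) _)
          simpa [abs_mul, abs_of_nonneg hγ0.le] using h
      _ ≤ Rmax * Δ + γ * (Δ * ‖v₂‖) + γ * ‖v₁ - v₂‖ := by
          have h3 := hpv
          nlinarith
  -- assemble
  have hnorm : ‖v₁ - v₂‖ ≤ Rmax * Δ + γ * (Δ * ‖v₂‖) + γ * ‖v₁ - v₂‖ := by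
    rw [pi_norm_le_iff_of_nonneg (by positivity)]
    intro s
    rw [Real.norm_eq_abs]
    exact key s
  rw [div_mul_eq_mul_div, le_div_iff₀ (by positivity : (0:ℝ) < (1 - γ)^2)]
  have hv2b' : γ * (Δ * ‖v₂‖) ≤ γ * (Δ * (Rmax / (1 - γ))) := by
    gcongr
  have hfrac : γ * (Δ * (Rmax / (1 - γ))) * (1 - γ) = γ * Δ * Rmax := by
    field_simp
  nlinarith [norm_nonneg (v₁ - v₂), hnorm, hv2b', mul_le_mul_of_nonneg_right hnorm h1γ.le]
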